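/- The tensor S^{abcd} := ½(n^aP^{bc}n^d + n^bP^{ac}n^d + n^aP^{bd}n^c + n^bP^{ad}n^c − 2n^an^bP^{cd} − 2n^cn^dP^{ab}) representing the energy-momentum map has gauge weight −2: under P' = P − 2n⊗_sζ and n' = z⁻¹n, the tensor S' built from (P',n') equals z⁻²S. Consequently, if a symmetric (0,2)-tensor V has gauge weight q (transforms as V ↦ z^qV), then τ(V) has gauge weight q−2. -/
import Mathlib


open Module LinearMap

variable {V : Type*} [AddCommGroup V] [Module ℝ V] [FiniteDimensional ℝ V]

/-- The trace `P^{ab} W_{ab}`. -/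
noncomputable def trP (P : Dual ℝ V →ₗ[ℝ] V) (W : V →ₗ[ℝ] Dual ℝ V) : ℝ :=
  LinearMap.trace ℝ V (P ∘ₗ W)

/-- The energy-momentum map, evaluated on two covectors. -/
noncomputable def tau (P : Dual ℝ V →ₗ[ℝ] V) (n : V) (W : V →ₗ[ℝ] Dual ℝ V)
    (ω χ : Dual ℝ V) : ℝ :=
  ω n * χ (P (W n)) + χ n * ω (P (W n)) - W n n * χ (P ω) - ω n * χ n * trP P W

/-- The tensor `S^{abcd} = ½(n^aP^{bc}n^d + n^bP^{ac}n^d + n^aP^{bd}n^c + n^bP^{ad}n^c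
- 2n^an^bP^{cd} - 2n^cn^dP^{ab})`, fully contracted with four covectors. -/
noncomputable def Sfun (P : Dual ℝ V →ₗ[ℝ] V) (n : V) (ω χ σ ρ : Dual ℝ V) : ℝ :=
  (1 / 2 : ℝ) * (ω n * σ (P χ) * ρ n + χ n * σ (P ω) * ρ n
    + ω n * ρ (P χ) * σ n + χ n * ρ (P ω) * σ n
    - 2 * ω n * χ n * ρ (P σ) - 2 * σ n * ρ n * χ (P ω))

lemma trace_smulRight'' (f : Dual ℝ V) (v : V) :
    LinearMap.trace ℝ V (f.smulRight v) = f v := by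
  have h : f.smulRight v = dualTensorHom ℝ V V (f ⊗ₜ v) := by
    ext x; simp
  rw [h, trace_eq_contract_apply, contractLeft_apply]

/-- The tensor `S` representing the energy-momentum map has gauge weight `-2`: under
`P' = P - 2n⊗ₛζ`, `n' = z⁻¹n` one has `S' = z⁻² S`.  Consequently if `V` has gauge weight
`q` then `τ(V)` has gauge weight `q - 2`. -/
theorem S_has_gauge_weight_minus_two
    (γ : V →ₗ[ℝ] Dual ℝ V) (ℓ : Dual ℝ V) (l2 : ℝ) (n : V) (P : Dual ℝ V →ₗ[ℝ] V)
    (hγsym : ∀ x y, γ x y = γ y x)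
    (hγn : γ n = 0)
    (hℓn : ℓ n = 1)
    (hPsym : ∀ ω χ : Dual ℝ V, ω (P χ) = χ (P ω))
    (hPℓ : P ℓ + l2 • n = 0)
    (hPγ : ∀ x : V, P (γ x) + ℓ x • n = x)
    (z : ℝ) (hz : z ≠ 0) (ζ : V)
    (P' : Dual ℝ V →ₗ[ℝ] V)
    (hP' : P' = P - (Dual.eval ℝ V ζ).smulRight n - (Dual.eval ℝ V n).smulRight ζ)
    (n' : V) (hn' : n' = z⁻¹ • n) :
    (∀ ω χ σ ρ : Dual ℝ V, Sfun P' n' ω χ σ ρ = (z ^ 2)⁻¹ * Sfun P n ω χ σ ρ) ∧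
    (∀ (q : ℤ) (W : V →ₗ[ℝ] Dual ℝ V), (∀ x y, W x y = W y x) →
      ∀ ω χ : Dual ℝ V,
        tau P' n' ((z ^ q : ℝ) • W) ω χ = z ^ (q - 2) * tau P n W ω χ) := by
  have hP'app : ∀ ω : Dual ℝ V, P' ω = P ω - ω ζ • n - ω n • ζ := by
    intro ω; simp [hP']
  constructor
  · intro ω χ σ ρ
    simp only [Sfun, hn', hP'app, map_smul, map_sub, smul_eq_mul]
    field_simp
    ring
  · intro q W hWsym ω χ
    have htr : trP P' ((z ^ q : ℝ) • W) = (z ^ q : ℝ) * (trP P W - 2 * W n ζ) := by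
      have hcomp : P' ∘ₗ ((z ^ q : ℝ) • W) =
          (z ^ q : ℝ) • (P ∘ₗ W - ((Dual.eval ℝ V ζ) ∘ₗ W).smulRight n
            - ((Dual.eval ℝ V n) ∘ₗ W).smulRight ζ) := by
        ext x; simp [hP', smulRight, sub_smul]
      simp only [trP, hcomp, map_smul, map_sub, trace_smulRight'', smul_eq_mul,
        LinearMap.comp_apply, Dual.eval_apply]
      rw [hWsym ζ n]
      ring
    have hq : (z:ℝ) ^ (q - 2) = z ^ q * (z ^ 2)⁻¹ := by
      rw [zpow_sub₀ hz, div_eq_mul_inv, zpow_two, sq]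
    simp only [tau, htr, hn', hq, map_smul, LinearMap.smul_apply, smul_eq_mul, hP'app,
      map_sub]
    have h1 : χ (P (W n)) = χ (P (W n)) := rfl
    field_simp
    ring
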